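/- For t ∈ (0,1), the function F(x) = 1/x + (t/2)·(x^{t−1} − 1)/(x^t − 1) is not nonincreasing on [1,∞); in fact F(x) ∼ −t/(2x^t) → 0⁻ as x → ∞ while F(x) < 0 for all large x, so F is eventually increasing. -/

import Mathlib

open Filter Real

noncomputable def Ffun (t x : ℝ) : ℝ :=
  1 / x + (t / 2) * ((x ^ (t - 1) - 1) / (x ^ t - 1))

noncomputable def Fder (t x : ℝ) : ℝ :=
  -(x ^ 2)⁻¹ + t / 2 * (((t - 1) * x ^ (t - 1 - 1) * (x ^ t - 1) -
      (x ^ (t - 1) - 1) * (t * x ^ (t - 1))) / (x ^ t - 1) ^ 2)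

noncomputable def Kfun (t x : ℝ) : ℝ :=
  (t ^ 2 / 2) * x ^ (t + 1) - (1 + t / 2) * x ^ (2 * t)
    + (2 + t / 2 - t ^ 2 / 2) * x ^ t - 1

lemma rpow_gt_one' {t x : ℝ} (ht : 0 < t) (hx : 1 < x) : 1 < x ^ t :=
  Real.one_lt_rpow_iff (by linarith) |>.mpr (Or.inl ⟨hx, ht⟩)

lemma hasDerivAt_Ffun {t x : ℝ} (ht : 0 < t) (hx : 1 < x) :
    HasDerivAt (Ffun t) (Fder t x) x := by
  have hx0 : (0:ℝ) < x := by linarith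
  have hu : 1 < x ^ t := rpow_gt_one' ht hx
  have hne : x ^ t - 1 ≠ 0 := by linarith
  have h1 : HasDerivAt (fun y : ℝ => y⁻¹) (-(x ^ 2)⁻¹) x := hasDerivAt_inv hx0.ne'
  have h2 : HasDerivAt (fun y : ℝ => y ^ (t - 1) - 1) ((t - 1) * x ^ (t - 1 - 1)) x :=
    (Real.hasDerivAt_rpow_const (Or.inl hx0.ne')).sub_const 1
  have h3 : HasDerivAt (fun y : ℝ => y ^ t - 1) (t * x ^ (t - 1)) x :=
    (Real.hasDerivAt_rpow_const (Or.inl hx0.ne')).sub_const 1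
  have h4 := (h2.div h3 hne).const_mul (t / 2)
  have h5 := h1.add h4
  have hF : Ffun t = fun y : ℝ =>
      y⁻¹ + t / 2 * ((y ^ (t - 1) - 1) / (y ^ t - 1)) := by
    funext y; simp [Ffun, one_div]
  rw [hF, Fder]
  exact h5

lemma Fder_eq {t x : ℝ} (ht : 0 < t) (hx : 1 < x) :
    Fder t x = Kfun t x / (x ^ 2 * (x ^ t - 1) ^ 2) := by
  have hx0 : (0:ℝ) < x := by linarith
  have hu : 1 < x ^ t := rpow_gt_one' ht hx
  have e1 : x ^ (t - 1) = x ^ t / x := by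
    rw [Real.rpow_sub hx0, Real.rpow_one]
  have e2 : x ^ (t - 1 - 1) = x ^ t / x ^ 2 := by
    rw [show t - 1 - 1 = t - 2 by ring, Real.rpow_sub hx0, Real.rpow_two]
  have e3 : x ^ (t + 1) = x ^ t * x := by
    rw [Real.rpow_add hx0, Real.rpow_one]
  have e4 : x ^ (2 * t) = (x ^ t) ^ 2 := by
    rw [show 2 * t = t * 2 by ring, Real.rpow_mul (le_of_lt hx0), Real.rpow_two]
  have hne : x ^ t - 1 ≠ 0 := by linarith
  rw [Fder, Kfun, e1, e2, e3, e4]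
  field_simp
  ring

lemma Kfun_div_tendsto {t : ℝ} (ht : 0 < t) (ht1 : t < 1) :
    Tendsto (fun x => Kfun t x / x ^ (t + 1)) atTop (nhds (t ^ 2 / 2)) := by
  have heq : ∀ᶠ x : ℝ in atTop, Kfun t x / x ^ (t + 1)
      = t ^ 2 / 2 - (1 + t / 2) * x ^ (t - 1)
        + (2 + t / 2 - t ^ 2 / 2) * x ^ (-(1:ℝ)) - x ^ (-(t + 1)) := by
    filter_upwards [eventually_gt_atTop (1:ℝ)] with x hx
    have hx0 : (0:ℝ) < x := by linarith
    have hp : (0:ℝ) < x ^ (t + 1) := Real.rpow_pos_of_pos hx0 _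
    rw [div_eq_iff hp.ne']
    have e1 : x ^ (t - 1) * x ^ (t + 1) = x ^ (2 * t) := by
      rw [← Real.rpow_add hx0]; ring_nf
    have e2 : x ^ (-(1:ℝ)) * x ^ (t + 1) = x ^ t := by
      rw [← Real.rpow_add hx0]; ring_nf
    have e3 : x ^ (-(t + 1)) * x ^ (t + 1) = 1 := by
      rw [← Real.rpow_add hx0, show -(t+1) + (t+1) = 0 by ring, Real.rpow_zero]
    rw [Kfun]
    nlinarith [e1, e2, e3]
  have l1 : Tendsto (fun x : ℝ => x ^ (t - 1)) atTop (nhds 0) := by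
    have := tendsto_rpow_neg_atTop (show (0:ℝ) < 1 - t by linarith)
    simpa [neg_sub] using this
  have l2 : Tendsto (fun x : ℝ => x ^ (-(1:ℝ))) atTop (nhds 0) :=
    tendsto_rpow_neg_atTop one_pos
  have l3 : Tendsto (fun x : ℝ => x ^ (-(t + 1))) atTop (nhds 0) :=
    tendsto_rpow_neg_atTop (by linarith)
  have h := ((((tendsto_const_nhds (x := t ^ 2 / 2)).sub (l1.const_mul (1 + t / 2))).add
      (l2.const_mul (2 + t / 2 - t ^ 2 / 2))).sub l3)
  have h2 : Tendsto (fun x : ℝ => t ^ 2 / 2 - (1 + t / 2) * x ^ (t - 1)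
      + (2 + t / 2 - t ^ 2 / 2) * x ^ (-(1:ℝ)) - x ^ (-(t + 1))) atTop (nhds (t ^ 2 / 2)) := by
    convert h using 2; ring
  exact Tendsto.congr' (heq.mono fun x hx => hx.symm) h2

theorem Ffun_not_antitone (t : ℝ) (ht : t ∈ Set.Ioo (0:ℝ) 1) :
    Tendsto (fun x : ℝ => x ^ t * Ffun t x) atTop (nhds (-(t / 2))) ∧
    (∀ᶠ x in atTop, Ffun t x < 0) ∧
    (∃ M : ℝ, 1 ≤ M ∧ MonotoneOn (Ffun t) (Set.Ici M)) ∧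
    ¬ AntitoneOn (Ffun t) (Set.Ici 1) := by
  obtain ⟨ht0, ht1⟩ := ht
  -- Part A
  have hA : Tendsto (fun x : ℝ => x ^ t * Ffun t x) atTop (nhds (-(t / 2))) := by
    have heq : ∀ᶠ x : ℝ in atTop, x ^ t * Ffun t x
        = x ^ (t - 1) + (t / 2) * ((x ^ (t - 1) - 1) / (1 - (x ^ t)⁻¹)) := by
      filter_upwards [eventually_gt_atTop (1:ℝ)] with x hx
      have hx0 : (0:ℝ) < x := by linarith
      have hu : 1 < x ^ t := rpow_gt_one' ht0 hx
      have e1 : x ^ (t - 1) = x ^ t / x := by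
        rw [Real.rpow_sub hx0, Real.rpow_one]
      rw [Ffun, e1]
      have hune : x ^ t ≠ 0 := by positivity
      have h1 : x ^ t - 1 ≠ 0 := by linarith
      have h2 : 1 - (x ^ t)⁻¹ ≠ 0 := by
        have : (x ^ t)⁻¹ < 1 := by
          rw [inv_lt_one_iff₀]; right; exact hu
        linarith
      field_simp
    have l1 : Tendsto (fun x : ℝ => x ^ (t - 1)) atTop (nhds 0) := by
      have := tendsto_rpow_neg_atTop (show (0:ℝ) < 1 - t by linarith)
      simpa [neg_sub] using this
    have l2 : Tendsto (fun x : ℝ => (x ^ t)⁻¹) atTop (nhds 0) :=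
      (tendsto_rpow_atTop ht0).inv_tendsto_atTop
    have hdiv := (l1.sub (tendsto_const_nhds (x := (1:ℝ)))).div
      ((tendsto_const_nhds (x := (1:ℝ))).sub l2) (by norm_num)
    have h := l1.add (hdiv.const_mul (t / 2))
    have h2 : Tendsto (fun x : ℝ => x ^ (t - 1)
        + (t / 2) * ((x ^ (t - 1) - 1) / (1 - (x ^ t)⁻¹))) atTop (nhds (-(t / 2))) := by
      convert h using 1 <;> norm_num
    exact Tendsto.congr' (heq.mono fun x hx => hx.symm) h2
  -- Part B
  have hB : ∀ᶠ x : ℝ in atTop, Ffun t x < 0 := by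
    have h1 : ∀ᶠ x : ℝ in atTop, x ^ t * Ffun t x < 0 :=
      hA.eventually_lt_const (by linarith)
    filter_upwards [h1, eventually_gt_atTop (0:ℝ)] with x hx hx0
    have hp : (0:ℝ) < x ^ t := Real.rpow_pos_of_pos hx0 t
    nlinarith
  -- Part C
  have hC : ∃ M : ℝ, 1 ≤ M ∧ MonotoneOn (Ffun t) (Set.Ici M) := by
    have hKpos : ∀ᶠ x : ℝ in atTop, 0 < Kfun t x := by
      have h1 := (Kfun_div_tendsto ht0 ht1).eventually_const_lt
        (show (0:ℝ) < t ^ 2 / 2 by positivity)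
      filter_upwards [h1, eventually_gt_atTop (0:ℝ)] with x hx hx0
      have hp : (0:ℝ) < x ^ (t + 1) := Real.rpow_pos_of_pos hx0 _
      have := mul_pos hx hp
      rwa [div_mul_cancel₀ _ hp.ne'] at this
    obtain ⟨M₀, hM₀⟩ := (hKpos.and (eventually_gt_atTop (1:ℝ))).exists_forall_of_atTop
    refine ⟨max M₀ 2, le_trans (by norm_num) (le_max_right _ _), ?_⟩
    have hM1 : ∀ x ∈ Set.Ici (max M₀ 2), 1 < x := fun x hx => by
      have := le_max_right M₀ 2
      have hx' : max M₀ 2 ≤ x := hx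
      linarith
    have hmono : StrictMonoOn (Ffun t) (Set.Ici (max M₀ 2)) := by
      apply strictMonoOn_of_deriv_pos (convex_Ici _)
      · intro x hx
        exact ((hasDerivAt_Ffun ht0 (hM1 x hx)).continuousAt).continuousWithinAt
      · intro x hx
        rw [interior_Ici] at hx
        have hx1 : 1 < x := by
          have : max M₀ 2 < x := hx
          have := le_max_right M₀ 2
          linarith
        have hxM₀ : M₀ ≤ x := by
          have : max M₀ 2 < x := hx
          have := le_max_left M₀ 2
          linarith
        have hK := (hM₀ x hxM₀).1
        rw [(hasDerivAt_Ffun ht0 hx1).deriv, Fder_eq ht0 hx1]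
        have hx0 : (0:ℝ) < x := by linarith
        have hu : 1 < x ^ t := rpow_gt_one' ht0 hx1
        have hden : (0:ℝ) < x ^ 2 * (x ^ t - 1) ^ 2 := by
          have h1 : (0:ℝ) < x ^ 2 := by positivity
          have h2 : (0:ℝ) < (x ^ t - 1) ^ 2 := by
            have : x ^ t - 1 ≠ 0 := by linarith
            positivity
          exact mul_pos h1 h2
        exact div_pos hK hden
    exact hmono.monotoneOn
  -- Part D
  have hD : ¬ AntitoneOn (Ffun t) (Set.Ici 1) := by
    have hF0 : Tendsto (Ffun t) atTop (nhds 0) := by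
      have l2 : Tendsto (fun x : ℝ => (x ^ t)⁻¹) atTop (nhds 0) :=
        (tendsto_rpow_atTop ht0).inv_tendsto_atTop
      have h := hA.mul l2
      have heq : ∀ᶠ x : ℝ in atTop, (x ^ t * Ffun t x) * (x ^ t)⁻¹ = Ffun t x := by
        filter_upwards [eventually_gt_atTop (0:ℝ)] with x hx0
        have : x ^ t ≠ 0 := by positivity
        field_simp
      have := Tendsto.congr' heq h
      simpa using this
    intro hanti
    obtain ⟨x₀, hx₀neg, hx₀1⟩ := (hB.and (eventually_ge_atTop (1:ℝ))).exists
    have hlt : ∀ᶠ x : ℝ in atTop, Ffun t x₀ < Ffun t x :=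
      hF0.eventually_const_lt hx₀neg
    obtain ⟨x₁, hx₁lt, hx₁ge⟩ := (hlt.and (eventually_ge_atTop x₀)).exists
    have := hanti hx₀1 (le_trans hx₀1 hx₁ge) hx₁ge
    linarith
  exact ⟨hA, hB, hC, hD⟩
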